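/- arXiv:1606.09197 — 7 statements merged into one kernel-verified Lean document; each statement's English description precedes it below -/
import Mathlib

section
/- Performance difference lemma (Lemma 1): Let p and q be two policies for the same finite-horizon MDP (same initial distribution ρ₁, transition kernel P, horizon T and bounded measurable rewards r_t). Then the difference of policy returns satisfies J(p) − J(q) = Σ_{t=1}^T ∫_S ∫_A A_t^q(s,a) p_t(da|s) ρ_t^p(ds), i.e. the sum over time-steps of the expected advantage of q under the state distribution of p and the action distribution of p. -/
/-!
Performance difference lemma (Lemma 1) for finite-horizon MDPs.

Time-steps are indexed `t = 0, …, T-1` (corresponding to `1, …, T` in the paper).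
-/

open MeasureTheory ProbabilityTheory

noncomputable section

namespace MDP

variable {S A : Type*} [MeasurableSpace S] [MeasurableSpace A]

/-- The state distribution `ρ_t^π` of a policy `π` (at the 0-indexed time-step `t`):
`ρ_0^π = ρ₁` and `ρ_{t+1}^π` is the pushforward through the transition kernel `P`
of the joint state–action measure obtained by composing `ρ_t^π` with the kernel `π_t`. -/
noncomputable def stateDist (ρ₁ : Measure S) (P : Kernel (S × A) S)
    (π : ℕ → Kernel S A) : ℕ → Measure S
  | 0 => ρ₁
  | (t + 1) =>
      Measure.bind (stateDist ρ₁ P π t) (fun s => Measure.bind (π t s) (fun a => P (s, a)))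

/-- Auxiliary value functions, indexed by the number `k` of remaining time-steps:
`Vk P π r T k = V^π_{T-k}` (with the convention `V^π_T = 0`, i.e. `V^π_{T+1} = 0` in the
1-indexed notation of the paper). -/
noncomputable def Vk (P : Kernel (S × A) S) (π : ℕ → Kernel S A)
    (r : ℕ → S → A → ℝ) (T : ℕ) : ℕ → S → ℝ
  | 0 => fun _ => 0
  | (k + 1) => fun s =>
      ∫ a, (r (T - (k + 1)) s a + ∫ s', Vk P π r T k s' ∂(P (s, a))) ∂(π (T - (k + 1)) s)

/-- The Q-function of policy `π` at (0-indexed) time-step `t`: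
`Q_t^π(s,a) = r_t(s,a) + ∫ V_{t+1}^π(s') P(ds'|s,a)`. -/
noncomputable def Qfun (P : Kernel (S × A) S) (π : ℕ → Kernel S A)
    (r : ℕ → S → A → ℝ) (T : ℕ) (t : ℕ) (s : S) (a : A) : ℝ :=
  r t s a + ∫ s', Vk P π r T (T - (t + 1)) s' ∂(P (s, a))

/-- The V-function of policy `π` at (0-indexed) time-step `t`. -/
noncomputable def Vfun (P : Kernel (S × A) S) (π : ℕ → Kernel S A)
    (r : ℕ → S → A → ℝ) (T : ℕ) (t : ℕ) (s : S) : ℝ :=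
  Vk P π r T (T - t) s

/-- The advantage function `A_t^π(s,a) = Q_t^π(s,a) − V_t^π(s)`. -/
noncomputable def Adv (P : Kernel (S × A) S) (π : ℕ → Kernel S A)
    (r : ℕ → S → A → ℝ) (T : ℕ) (t : ℕ) (s : S) (a : A) : ℝ :=
  Qfun P π r T t s a - Vfun P π r T t s

/-- The policy return `J(π) = Σ_{t=0}^{T-1} ∫_S ∫_A r_t(s,a) π_t(da|s) ρ_t^π(ds)`. -/
noncomputable def policyReturn (ρ₁ : Measure S) (P : Kernel (S × A) S)
    (r : ℕ → S → A → ℝ) (T : ℕ) (π : ℕ → Kernel S A) : ℝ :=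
  ∑ t ∈ Finset.range T, ∫ s, ∫ a, r t s a ∂(π t s) ∂(stateDist ρ₁ P π t)

lemma integrable_of_bound {X : Type*} [MeasurableSpace X] (μ : Measure X) [IsFiniteMeasure μ]
    (f : X → ℝ) (hf : AEStronglyMeasurable f μ) (C : ℝ) (hC : ∀ x, |f x| ≤ C) :
    Integrable f μ :=
  Integrable.mono' (integrable_const C) hf
    (Filter.Eventually.of_forall fun x => by rw [Real.norm_eq_abs]; exact hC x)

lemma abs_integral_le {X : Type*} [MeasurableSpace X] (μ : Measure X) [IsProbabilityMeasure μ]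
    (f : X → ℝ) (C : ℝ) (hC : ∀ x, |f x| ≤ C) : |∫ x, f x ∂μ| ≤ C := by
  have := norm_integral_le_of_norm_le_const (μ := μ) (f := f) (C := C)
    (Filter.Eventually.of_forall fun x => by rw [Real.norm_eq_abs]; exact hC x)
  simpa using this

lemma integral_bind' {X Y : Type*} [MeasurableSpace X] [MeasurableSpace Y]
    (μ : Measure X) [IsProbabilityMeasure μ] (κ : X → Measure Y) (hκ : Measurable κ)
    (hκp : ∀ x, IsProbabilityMeasure (κ x))
    (f : Y → ℝ) (hf : Measurable f) (C : ℝ) (hC : ∀ y, |f y| ≤ C) :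
    ∫ y, f y ∂(μ.bind κ) = ∫ x, ∫ y, f y ∂(κ x) ∂μ := by
  have hbp : IsProbabilityMeasure (μ.bind κ) := by
    constructor
    rw [Measure.bind_apply MeasurableSet.univ hκ.aemeasurable]
    simp [(hκp _).measure_univ]
  have hint : Integrable f (μ.bind κ) :=
    integrable_of_bound _ f hf.aestronglyMeasurable C hC
  have hint2 : ∀ x, Integrable f (κ x) := fun x =>
    have := hκp x
    integrable_of_bound _ f hf.aestronglyMeasurable C hC
  set gp : X → ENNReal := fun x => ∫⁻ y, ENNReal.ofReal (f y) ∂(κ x) with hgp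
  set gm : X → ENNReal := fun x => ∫⁻ y, ENNReal.ofReal (-f y) ∂(κ x) with hgm
  have hmp : Measurable gp := (Measure.measurable_lintegral hf.ennreal_ofReal).comp hκ
  have hmm : Measurable gm := (Measure.measurable_lintegral hf.neg.ennreal_ofReal).comp hκ
  have hbp' : ∀ x, gp x ≤ ENNReal.ofReal C := by
    intro x
    calc gp x ≤ ∫⁻ _, ENNReal.ofReal C ∂(κ x) :=
          lintegral_mono fun y => ENNReal.ofReal_le_ofReal ((abs_le.mp (hC y)).2)
      _ = ENNReal.ofReal C := by simp [(hκp x).measure_univ]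
  have hbm' : ∀ x, gm x ≤ ENNReal.ofReal C := by
    intro x
    calc gm x ≤ ∫⁻ _, ENNReal.ofReal C ∂(κ x) :=
          lintegral_mono fun y => ENNReal.ofReal_le_ofReal
            (by have := (abs_le.mp (hC y)).1; linarith)
      _ = ENNReal.ofReal C := by simp [(hκp x).measure_univ]
  have hip : Integrable (fun x => (gp x).toReal) μ :=
    integrable_of_bound _ _ hmp.ennreal_toReal.aestronglyMeasurable (ENNReal.ofReal C).toReal
      (fun x => by
        rw [abs_of_nonneg ENNReal.toReal_nonneg]
        exact ENNReal.toReal_mono ENNReal.ofReal_ne_top (hbp' x))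
  have him : Integrable (fun x => (gm x).toReal) μ :=
    integrable_of_bound _ _ hmm.ennreal_toReal.aestronglyMeasurable (ENNReal.ofReal C).toReal
      (fun x => by
        rw [abs_of_nonneg ENNReal.toReal_nonneg]
        exact ENNReal.toReal_mono ENNReal.ofReal_ne_top (hbm' x))
  calc ∫ y, f y ∂(μ.bind κ)
      = (∫⁻ y, ENNReal.ofReal (f y) ∂(μ.bind κ)).toReal
        - (∫⁻ y, ENNReal.ofReal (-f y) ∂(μ.bind κ)).toReal :=
        integral_eq_lintegral_pos_part_sub_lintegral_neg_part hint
    _ = (∫⁻ x, gp x ∂μ).toReal - (∫⁻ x, gm x ∂μ).toReal := by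
        rw [Measure.lintegral_bind hκ.aemeasurable hf.ennreal_ofReal.aemeasurable,
          Measure.lintegral_bind (f := fun y => ENNReal.ofReal (-f y)) hκ.aemeasurable hf.neg.ennreal_ofReal.aemeasurable]
    _ = (∫ x, (gp x).toReal ∂μ) - (∫ x, (gm x).toReal ∂μ) := by
        rw [integral_toReal hmp.aemeasurable
            (Filter.Eventually.of_forall fun x => lt_of_le_of_lt (hbp' x) ENNReal.ofReal_lt_top),
          integral_toReal hmm.aemeasurable
            (Filter.Eventually.of_forall fun x => lt_of_le_of_lt (hbm' x) ENNReal.ofReal_lt_top)]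
    _ = ∫ x, ((gp x).toReal - (gm x).toReal) ∂μ := (integral_sub hip him).symm
    _ = ∫ x, ∫ y, f y ∂(κ x) ∂μ := by
        refine integral_congr_ae (Filter.Eventually.of_forall fun x => ?_)
        exact (integral_eq_lintegral_pos_part_sub_lintegral_neg_part (hint2 x)).symm


/-- one-step transition kernel of policy `π` at time `t` -/
noncomputable def step (P : Kernel (S × A) S) (π : ℕ → Kernel S A) (t : ℕ) : Kernel S S :=
  Kernel.snd ((π t) ⊗ₖ P)

section step

variable (P : Kernel (S × A) S) [IsMarkovKernel P] (π : ℕ → Kernel S A)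
  [∀ t, IsMarkovKernel (π t)]

instance (t : ℕ) : IsMarkovKernel (step P π t) := by
  unfold step; infer_instance

lemma step_apply (t : ℕ) (s : S) :
    step P π t s = (π t s).bind (fun a => P (s, a)) := by
  ext B hB
  rw [step, Kernel.snd_apply' _ _ hB,
    Kernel.compProd_apply (show MeasurableSet (Prod.snd ⁻¹' B) from measurable_snd hB),
    Measure.bind_apply hB (show Measurable (fun a => P (s,a)) from P.measurable.comp measurable_prodMk_left).aemeasurable]
  rfl

lemma stateDist_succ (ρ₁ : Measure S) (t : ℕ) :
    stateDist ρ₁ P π (t + 1) = (stateDist ρ₁ P π t).bind (step P π t) := by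
  show Measure.bind _ _ = Measure.bind _ _
  congr 1
  funext s
  rw [step_apply]

lemma isProbabilityMeasure_bind_step (μ : Measure S) [IsProbabilityMeasure μ] (t : ℕ) :
    IsProbabilityMeasure (μ.bind (step P π t)) := by
  constructor
  rw [Measure.bind_apply MeasurableSet.univ (Kernel.measurable _).aemeasurable]
  simp

instance stateDist_prob (ρ₁ : Measure S) [IsProbabilityMeasure ρ₁] (t : ℕ) :
    IsProbabilityMeasure (stateDist ρ₁ P π t) := by
  induction t with
  | zero => exact ‹_›
  | succ t ih => rw [stateDist_succ]; exact isProbabilityMeasure_bind_step P π _ t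

end step

section meas

variable (P : Kernel (S × A) S) [IsMarkovKernel P] (π : ℕ → Kernel S A)
  [∀ t, IsMarkovKernel (π t)] (r : ℕ → S → A → ℝ) (T : ℕ)

/-- Measurability of integrals against a kernel. -/
lemma measurable_kernel_integral {α β : Type*} [MeasurableSpace α] [MeasurableSpace β]
    (κ : Kernel α β) [IsSFiniteKernel κ] (f : α → β → ℝ)
    (hf : Measurable (fun x : α × β => f x.1 x.2)) :
    Measurable fun x => ∫ y, f x y ∂κ x :=
  (StronglyMeasurable.integral_kernel_prod_right' (hf.stronglyMeasurable)).measurable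

lemma measurable_Vk (hr : ∀ t, Measurable (Function.uncurry (r t))) (k : ℕ) :
    Measurable (Vk P π r T k) := by
  induction k with
  | zero => exact measurable_const
  | succ k ih =>
      show Measurable fun s =>
        ∫ a, (r (T - (k + 1)) s a + ∫ s', Vk P π r T k s' ∂(P (s, a)))
          ∂(π (T - (k + 1)) s)
      exact measurable_kernel_integral (π (T - (k+1))) _
        ((hr (T - (k+1))).add
          (measurable_kernel_integral P (fun x s' => Vk P π r T k s')
            (ih.comp measurable_snd)))

lemma measurable_PVk (hr : ∀ t, Measurable (Function.uncurry (r t))) (k : ℕ) :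
    Measurable fun x : S × A => ∫ s', Vk P π r T k s' ∂(P x) := by
  have := measurable_kernel_integral P (fun (x : S × A) s' => Vk P π r T k s')
    ((measurable_Vk P π r T hr k).comp measurable_snd)
  exact this

lemma Vk_bound (hr : ∀ t, ∃ C : ℝ, ∀ s a, |r t s a| ≤ C) (k : ℕ) :
    ∃ C : ℝ, 0 ≤ C ∧ ∀ s, |Vk P π r T k s| ≤ C := by
  induction k with
  | zero => exact ⟨0, le_refl _, fun s => by simp [Vk]⟩
  | succ k ih =>
      obtain ⟨C, hC0, hC⟩ := ih
      obtain ⟨D, hD⟩ := hr (T - (k+1))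
      refine ⟨max D 0 + C, by positivity, fun s => ?_⟩
      show |∫ a, (r (T - (k + 1)) s a + ∫ s', Vk P π r T k s' ∂(P (s, a)))
        ∂(π (T - (k + 1)) s)| ≤ _
      refine abs_integral_le _ _ _ (fun a => ?_)
      calc |r (T - (k+1)) s a + ∫ s', Vk P π r T k s' ∂(P (s, a))|
          ≤ |r (T - (k+1)) s a| + |∫ s', Vk P π r T k s' ∂(P (s, a))| := abs_add_le _ _
        _ ≤ max D 0 + C := by
            gcongr
            · exact le_trans (hD s a) (le_max_left _ _)
            · exact abs_integral_le _ _ _ hC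

lemma integral_bind_step (μ : Measure S) [IsProbabilityMeasure μ] (t : ℕ)
    (f : S → ℝ) (hf : Measurable f) (C : ℝ) (hC : ∀ s, |f s| ≤ C) :
    ∫ s', f s' ∂(μ.bind (step P π t)) = ∫ s, ∫ a, ∫ s', f s' ∂(P (s, a)) ∂(π t s) ∂μ := by
  rw [integral_bind' μ _ (Kernel.measurable _) (fun s => inferInstance) f hf C hC]
  refine integral_congr_ae (Filter.Eventually.of_forall fun s => ?_)
  show ∫ y, f y ∂(step P π t s) = _
  rw [step_apply, integral_bind' _ _ (show Measurable (fun a => P (s,a)) from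
    P.measurable.comp measurable_prodMk_left) (fun a => inferInstance) f hf C hC]

end meas

section iter

variable (P : Kernel (S × A) S) [IsMarkovKernel P] (π : ℕ → Kernel S A)
  [∀ t, IsMarkovKernel (π t)]

noncomputable def iter (P : Kernel (S × A) S) (π : ℕ → Kernel S A) :
    ℕ → ℕ → Measure S → Measure S
  | _, 0, μ => μ
  | t, (j+1), μ => iter P π (t+1) j (μ.bind (step P π t))

@[simp] lemma iter_zero (t : ℕ) (μ : Measure S) : iter P π t 0 μ = μ := rfl

lemma iter_succ_left (t j : ℕ) (μ : Measure S) :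
    iter P π t (j+1) μ = iter P π (t+1) j (μ.bind (step P π t)) := rfl

lemma iter_succ_right (t j : ℕ) (μ : Measure S) :
    iter P π t (j+1) μ = (iter P π t j μ).bind (step P π (t + j)) := by
  induction j generalizing t μ with
  | zero => simp [iter_succ_left]
  | succ j ih =>
      have h : t + 1 + j = t + (j + 1) := by omega
      rw [iter_succ_left, ih, ← iter_succ_left, h]

lemma iter_prob (t j : ℕ) (μ : Measure S) [IsProbabilityMeasure μ] :
    IsProbabilityMeasure (iter P π t j μ) := by
  induction j generalizing t μ with
  | zero => simpa using ‹_›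
  | succ j ih =>
      rw [iter_succ_left]
      have := isProbabilityMeasure_bind_step P π μ t
      exact ih (t+1) _

lemma stateDist_eq_iter (ρ₁ : Measure S) (t : ℕ) :
    stateDist ρ₁ P π t = iter P π 0 t ρ₁ := by
  induction t with
  | zero => rfl
  | succ t ih => rw [stateDist_succ, ih, iter_succ_right]; norm_num

end iter

section value

variable (P : Kernel (S × A) S) [IsMarkovKernel P] (π : ℕ → Kernel S A)
  [∀ t, IsMarkovKernel (π t)] (r : ℕ → S → A → ℝ) (T : ℕ)

lemma Vk_integral (hr : ∀ t, Measurable (Function.uncurry (r t)))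
    (hb : ∀ t, ∃ C : ℝ, ∀ s a, |r t s a| ≤ C) :
    ∀ k, k ≤ T → ∀ (μ : Measure S), IsProbabilityMeasure μ →
      ∫ s, Vk P π r T k s ∂μ =
        ∑ j ∈ Finset.range k,
          ∫ s, ∫ a, r (T - k + j) s a ∂(π (T - k + j) s) ∂(iter P π (T - k) j μ) := by
  intro k
  induction k with
  | zero => intro _ μ _; simp [Vk]
  | succ k ih =>
      intro hk μ hμ
      obtain ⟨D, hD⟩ := hb (T - (k+1))
      have hD0 : ∀ s a, |r (T - (k+1)) s a| ≤ max D 0 :=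
        fun s a => le_trans (hD s a) (le_max_left _ _)
      obtain ⟨C, hC0, hC⟩ := Vk_bound P π r T hb k
      -- measurability facts
      have hrm : Measurable (fun x : S × A => r (T - (k+1)) x.1 x.2) := hr (T - (k+1))
      have hgm : Measurable (fun x : S × A => ∫ s', Vk P π r T k s' ∂(P x)) :=
        measurable_PVk P π r T hr k
      have hgb : ∀ x : S × A, |∫ s', Vk P π r T k s' ∂(P x)| ≤ C := fun x =>
        abs_integral_le _ _ _ hC
      -- split the defining integral
      have hsplit : ∫ s, Vk P π r T (k+1) s ∂μ =
          (∫ s, ∫ a, r (T - (k+1)) s a ∂(π (T - (k+1)) s) ∂μ)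
          + ∫ s, ∫ a, (∫ s', Vk P π r T k s' ∂(P (s, a))) ∂(π (T - (k+1)) s) ∂μ := by
        have h1 : ∀ s, ∫ a, (r (T - (k+1)) s a + ∫ s', Vk P π r T k s' ∂(P (s, a)))
            ∂(π (T - (k+1)) s)
            = (∫ a, r (T - (k+1)) s a ∂(π (T - (k+1)) s))
              + ∫ a, (∫ s', Vk P π r T k s' ∂(P (s, a))) ∂(π (T - (k+1)) s) := by
          intro s
          refine integral_add ?_ ?_
          · exact integrable_of_bound _ _
              ((hrm.comp measurable_prodMk_left).aestronglyMeasurable) _ (fun a => hD0 s a)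
          · exact integrable_of_bound _ _
              ((hgm.comp measurable_prodMk_left).aestronglyMeasurable) C
              (fun a => hgb (s, a))
        calc ∫ s, Vk P π r T (k+1) s ∂μ
            = ∫ s, ((∫ a, r (T - (k+1)) s a ∂(π (T - (k+1)) s))
              + ∫ a, (∫ s', Vk P π r T k s' ∂(P (s, a))) ∂(π (T - (k+1)) s)) ∂μ := by
              refine integral_congr_ae (Filter.Eventually.of_forall fun s => ?_)
              exact h1 s
          _ = _ := by
              refine integral_add ?_ ?_
              · exact integrable_of_bound _ _
                  (measurable_kernel_integral (π (T - (k+1))) _ hrm).aestronglyMeasurable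
                  _ (fun s => abs_integral_le _ _ _ (hD0 s))
              · exact integrable_of_bound _ _
                  (measurable_kernel_integral (π (T - (k+1)))
                    (fun s a => ∫ s', Vk P π r T k s' ∂(P (s, a))) hgm).aestronglyMeasurable
                  C (fun s => abs_integral_le _ _ _ (fun a => hgb (s, a)))
      have hmain : ∫ s, ∫ a, (∫ s', Vk P π r T k s' ∂(P (s, a))) ∂(π (T - (k+1)) s) ∂μ
          = ∫ s', Vk P π r T k s' ∂(μ.bind (step P π (T - (k+1)))) :=
        (integral_bind_step P π μ (T - (k+1)) _ (measurable_Vk P π r T hr k) C hC).symm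
      have hprob : IsProbabilityMeasure (μ.bind (step P π (T - (k+1)))) :=
        isProbabilityMeasure_bind_step P π μ _
      have hTk : T - (k+1) + 1 = T - k := by omega
      rw [hsplit, hmain, ih (by omega) _ hprob, add_comm, Finset.sum_range_succ']
      congr 1
      refine Finset.sum_congr rfl fun j _ => ?_
      have h1 : T - k + j = T - (k+1) + (j+1) := by omega
      have h2 : iter P π (T - k) j (μ.bind (step P π (T - (k+1))))
          = iter P π (T - (k+1)) (j+1) μ := by
        rw [iter_succ_left, hTk]
      rw [h1, h2]

end value

/-- **Performance difference lemma** (Lemma 1): for any two policies `p` and `q` of the same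
finite-horizon MDP, `J(p) − J(q) = Σ_t E_{s ∼ ρ_t^p, a ∼ p_t(·|s)} [A_t^q(s,a)]`. -/
theorem performance_difference
    (ρ₁ : Measure S) [IsProbabilityMeasure ρ₁]
    (P : Kernel (S × A) S) [IsMarkovKernel P]
    (T : ℕ) (r : ℕ → S → A → ℝ)
    (hr_meas : ∀ t, Measurable (Function.uncurry (r t)))
    (hr_bdd : ∀ t, ∃ C : ℝ, ∀ s a, |r t s a| ≤ C)
    (p q : ℕ → Kernel S A) [∀ t, IsMarkovKernel (p t)] [∀ t, IsMarkovKernel (q t)] :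
    policyReturn ρ₁ P r T p - policyReturn ρ₁ P r T q =
      ∑ t ∈ Finset.range T,
        ∫ s, ∫ a, Adv P q r T t s a ∂(p t s) ∂(stateDist ρ₁ P p t) := by
  have key : ∀ t, ∫ s, ∫ a, Adv P q r T t s a ∂(p t s) ∂(stateDist ρ₁ P p t)
      = (∫ s, ∫ a, r t s a ∂(p t s) ∂(stateDist ρ₁ P p t))
        + ((∫ s, Vk P q r T (T - (t+1)) s ∂(stateDist ρ₁ P p (t+1)))
           - ∫ s, Vk P q r T (T - t) s ∂(stateDist ρ₁ P p t)) := by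
    intro t
    obtain ⟨D, hD⟩ := hr_bdd t
    have hD0 : ∀ s a, |r t s a| ≤ max D 0 := fun s a => le_trans (hD s a) (le_max_left _ _)
    obtain ⟨C1, hC10, hC1⟩ := Vk_bound P q r T hr_bdd (T - (t+1))
    obtain ⟨C2, hC20, hC2⟩ := Vk_bound P q r T hr_bdd (T - t)
    have hrm : Measurable (fun x : S × A => r t x.1 x.2) := hr_meas t
    have hgm : Measurable (fun x : S × A => ∫ s', Vk P q r T (T - (t+1)) s' ∂(P x)) :=
      measurable_PVk P q r T hr_meas _
    have hgb : ∀ x : S × A, |∫ s', Vk P q r T (T - (t+1)) s' ∂(P x)| ≤ C1 := fun x =>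
      abs_integral_le _ _ _ hC1
    have hVm : Measurable (Vk P q r T (T - t)) := measurable_Vk P q r T hr_meas _
    have h1 : ∀ s, ∫ a, Adv P q r T t s a ∂(p t s)
        = ((∫ a, r t s a ∂(p t s))
            + (∫ a, (∫ s', Vk P q r T (T - (t+1)) s' ∂(P (s, a))) ∂(p t s)))
          - Vk P q r T (T - t) s := by
      intro s
      have i1 : Integrable (fun a => r t s a) (p t s) :=
        integrable_of_bound _ _ ((hrm.comp measurable_prodMk_left).aestronglyMeasurable) _
          (hD0 s)
      have i2 : Integrable (fun a => ∫ s', Vk P q r T (T - (t+1)) s' ∂(P (s, a))) (p t s) :=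
        integrable_of_bound _ _ ((hgm.comp measurable_prodMk_left).aestronglyMeasurable) C1
          (fun a => hgb (s, a))
      calc ∫ a, Adv P q r T t s a ∂(p t s)
          = ∫ a, ((r t s a + ∫ s', Vk P q r T (T - (t+1)) s' ∂(P (s, a)))
              - Vk P q r T (T - t) s) ∂(p t s) := rfl
        _ = (∫ a, (r t s a + ∫ s', Vk P q r T (T - (t+1)) s' ∂(P (s, a))) ∂(p t s))
            - ∫ _a, Vk P q r T (T - t) s ∂(p t s) := integral_sub (i1.add i2) (integrable_const _)
        _ = _ := by rw [integral_add i1 i2, integral_const]; simp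
    have F1m : Measurable fun s => ∫ a, r t s a ∂(p t s) :=
      measurable_kernel_integral (p t) _ hrm
    have F2m : Measurable fun s => ∫ a, (∫ s', Vk P q r T (T - (t+1)) s' ∂(P (s, a))) ∂(p t s) :=
      measurable_kernel_integral (p t) (fun s a => ∫ s', Vk P q r T (T - (t+1)) s' ∂(P (s, a)))
        hgm
    have F1i : Integrable (fun s => ∫ a, r t s a ∂(p t s)) (stateDist ρ₁ P p t) :=
      integrable_of_bound _ _ F1m.aestronglyMeasurable _
        (fun s => abs_integral_le _ _ _ (hD0 s))
    have F2i : Integrable (fun s => ∫ a, (∫ s', Vk P q r T (T - (t+1)) s' ∂(P (s, a)))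
        ∂(p t s)) (stateDist ρ₁ P p t) :=
      integrable_of_bound _ _ F2m.aestronglyMeasurable C1
        (fun s => abs_integral_le _ _ _ (fun a => hgb (s, a)))
    have F3i : Integrable (Vk P q r T (T - t)) (stateDist ρ₁ P p t) :=
      integrable_of_bound _ _ hVm.aestronglyMeasurable C2 hC2
    have h2 : ∫ s, ∫ a, (∫ s', Vk P q r T (T - (t+1)) s' ∂(P (s, a))) ∂(p t s)
          ∂(stateDist ρ₁ P p t)
        = ∫ s, Vk P q r T (T - (t+1)) s ∂(stateDist ρ₁ P p (t+1)) := by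
      rw [stateDist_succ]
      exact (integral_bind_step P p (stateDist ρ₁ P p t) t _
        (measurable_Vk P q r T hr_meas _) C1 hC1).symm
    calc ∫ s, ∫ a, Adv P q r T t s a ∂(p t s) ∂(stateDist ρ₁ P p t)
        = ∫ s, (((∫ a, r t s a ∂(p t s))
            + (∫ a, (∫ s', Vk P q r T (T - (t+1)) s' ∂(P (s, a))) ∂(p t s)))
          - Vk P q r T (T - t) s) ∂(stateDist ρ₁ P p t) :=
          integral_congr_ae (Filter.Eventually.of_forall h1)
      _ = ((∫ s, ∫ a, r t s a ∂(p t s) ∂(stateDist ρ₁ P p t))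
            + ∫ s, ∫ a, (∫ s', Vk P q r T (T - (t+1)) s' ∂(P (s, a))) ∂(p t s)
              ∂(stateDist ρ₁ P p t))
          - ∫ s, Vk P q r T (T - t) s ∂(stateDist ρ₁ P p t) := by
          have F12i : Integrable (fun s => (∫ a, r t s a ∂(p t s))
              + ∫ a, (∫ s', Vk P q r T (T - (t+1)) s' ∂(P (s, a))) ∂(p t s))
              (stateDist ρ₁ P p t) := F1i.add F2i
          rw [integral_sub F12i F3i, integral_add F1i F2i]
      _ = _ := by rw [h2]; ring
  have hWT : ∫ s, Vk P q r T (T - T) s ∂(stateDist ρ₁ P p T) = 0 := by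
    rw [Nat.sub_self]
    simp [Vk]
  have hW0 : ∫ s, Vk P q r T (T - 0) s ∂(stateDist ρ₁ P p 0) = policyReturn ρ₁ P r T q := by
    show ∫ s, Vk P q r T T s ∂ρ₁ = _
    rw [Vk_integral P q r T hr_meas hr_bdd T le_rfl ρ₁ inferInstance]
    refine Finset.sum_congr rfl fun j _ => ?_
    have h : T - T + j = j := by omega
    have h0 : T - T = 0 := Nat.sub_self T
    rw [h, h0, ← stateDist_eq_iter]
  have hsum : ∑ t ∈ Finset.range T,
        ∫ s, ∫ a, Adv P q r T t s a ∂(p t s) ∂(stateDist ρ₁ P p t)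
      = policyReturn ρ₁ P r T p
        + ((∫ s, Vk P q r T (T - T) s ∂(stateDist ρ₁ P p T))
          - ∫ s, Vk P q r T (T - 0) s ∂(stateDist ρ₁ P p 0)) := by
    calc ∑ t ∈ Finset.range T,
          ∫ s, ∫ a, Adv P q r T t s a ∂(p t s) ∂(stateDist ρ₁ P p t)
        = ∑ t ∈ Finset.range T,
            ((∫ s, ∫ a, r t s a ∂(p t s) ∂(stateDist ρ₁ P p t))
              + ((∫ s, Vk P q r T (T - (t+1)) s ∂(stateDist ρ₁ P p (t+1)))
                - ∫ s, Vk P q r T (T - t) s ∂(stateDist ρ₁ P p t))) :=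
          Finset.sum_congr rfl fun t _ => key t
      _ = (∑ t ∈ Finset.range T, ∫ s, ∫ a, r t s a ∂(p t s) ∂(stateDist ρ₁ P p t))
          + ∑ t ∈ Finset.range T,
              ((∫ s, Vk P q r T (T - (t+1)) s ∂(stateDist ρ₁ P p (t+1)))
                - ∫ s, Vk P q r T (T - t) s ∂(stateDist ρ₁ P p t)) :=
          Finset.sum_add_distrib
      _ = _ := by
          rw [Finset.sum_range_sub (fun u => ∫ s, Vk P q r T (T - u) s ∂(stateDist ρ₁ P p u))]
          rfl
  rw [hsum, hWT, hW0]
  ring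


end MDP
end
end

section
/- Nonnegativity of the covariance part of the Gaussian KL divergence (Eq. (posKLCov)): For any two positive definite real n × n matrices Σ and Σ', one has trace(Σ'⁻¹ Σ) − n + log(det Σ' / det Σ) ≥ 0. -/
/-!
Nonnegativity of the covariance part of the Gaussian KL divergence (Eq. (posKLCov)).
-/

open Matrix

/-- Trace of a real symmetric matrix equals the sum of its eigenvalues. -/
lemma trace_eq_sum_eigenvalues' {m : Type*} [Fintype m] [DecidableEq m]
    {A : Matrix m m ℝ} (hA : A.IsHermitian) :
    A.trace = ∑ i, hA.eigenvalues i := by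
  conv_lhs => rw [hA.spectral_theorem]
  rw [Unitary.conjStarAlgAut_apply, trace_mul_cycle]
  rw [(Matrix.mem_unitaryGroup_iff').mp (IsHermitian.eigenvectorUnitary hA).2,
    one_mul, trace_diagonal]
  simp [Function.comp]

/-- For any two positive definite real `n × n` matrices `Σ` and `Σ'`,
`trace(Σ'⁻¹ Σ) − n + log(det Σ' / det Σ) ≥ 0`. -/
theorem gaussian_kl_cov_nonneg {n : ℕ} (S S' : Matrix (Fin n) (Fin n) ℝ)
    (hS : S.PosDef) (hS' : S'.PosDef) :
    0 ≤ (S'⁻¹ * S).trace - (n : ℝ) + Real.log (S'.det / S.det) := by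
  classical
  set B := (open scoped MatrixOrder in CFC.sqrt S') with hBdef
  have hB : B.PosSemidef := by open scoped MatrixOrder in exact (CFC.sqrt_nonneg S').posSemidef
  have hBB : B * B = S' := by
    open scoped MatrixOrder in exact CFC.sqrt_mul_sqrt_self S' hS'.posSemidef.nonneg
  have hdetS' : S'.det ≠ 0 := hS'.det_pos.ne'
  have hdetS : S.det ≠ 0 := hS.det_pos.ne'
  have hBdet : B.det ≠ 0 := by
    intro h
    apply hdetS'
    rw [← hBB, det_mul, h, mul_zero]
  have hBinvH : (B⁻¹)ᴴ = B⁻¹ := hB.inv.isHermitian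
  set A := B⁻¹ * S * B⁻¹ with hAdef
  have hA : A.PosDef := by
    refine posDef_iff_dotProduct_mulVec.mpr ⟨?_, fun {x} hx => ?_⟩
    · have h := isHermitian_mul_mul_conjTranspose B⁻¹ hS.isHermitian
      rwa [hBinvH] at h
    · have hxB : B⁻¹ *ᵥ x ≠ 0 := by
        intro h
        apply hx
        have : B *ᵥ (B⁻¹ *ᵥ x) = B *ᵥ 0 := by rw [h]
        rwa [mulVec_mulVec, mul_nonsing_inv _ (isUnit_iff_ne_zero.mpr hBdet),
          one_mulVec, mulVec_zero] at this
      have := hS.dotProduct_mulVec_pos hxB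
      have key : star x ⬝ᵥ (A *ᵥ x) = star (B⁻¹ *ᵥ x) ⬝ᵥ (S *ᵥ (B⁻¹ *ᵥ x)) := by
        rw [hAdef, ← mulVec_mulVec, ← mulVec_mulVec, dotProduct_mulVec, star_mulVec, hBinvH,
          ← dotProduct_mulVec]
      rw [key]
      exact this
  have hμpos : ∀ i, 0 < hA.isHermitian.eigenvalues i := hA.eigenvalues_pos
  -- trace identity
  have htr : (S'⁻¹ * S).trace = ∑ i, hA.isHermitian.eigenvalues i := by
    rw [← trace_eq_sum_eigenvalues' hA.isHermitian, hAdef, trace_mul_cycle,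
      ← Matrix.mul_inv_rev, hBB]
  -- determinant identity
  have hdetA : A.det = S.det / S'.det := by
    rw [hAdef, det_mul, det_mul, det_nonsing_inv, Ring.inverse_eq_inv, ← hBB, det_mul]
    field_simp
  have hdet2 : A.det = ∏ i, hA.isHermitian.eigenvalues i := by
    simpa using hA.isHermitian.det_eq_prod_eigenvalues
  have hlog : Real.log (S'.det / S.det) = -∑ i, Real.log (hA.isHermitian.eigenvalues i) := by
    have h1 : Real.log A.det = ∑ i, Real.log (hA.isHermitian.eigenvalues i) := by
      rw [hdet2, Real.log_prod (fun i _ => (hμpos i).ne')]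
    rw [← h1, hdetA, Real.log_div hdetS hdetS', Real.log_div hdetS' hdetS]
    ring
  rw [htr, hlog]
  have hsum : 0 ≤ ∑ i, (hA.isHermitian.eigenvalues i - 1
      - Real.log (hA.isHermitian.eigenvalues i)) := by
    refine Finset.sum_nonneg fun i _ => ?_
    have := Real.log_le_sub_one_of_pos (hμpos i)
    linarith
  have hexp : ∑ i, (hA.isHermitian.eigenvalues i - 1
      - Real.log (hA.isHermitian.eigenvalues i))
      = (∑ i, hA.isHermitian.eigenvalues i) - n
      - ∑ i, Real.log (hA.isHermitian.eigenvalues i) := by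
    rw [Finset.sum_sub_distrib, Finset.sum_sub_distrib]
    simp
  rw [hexp] at hsum
  linarith
end

section
/- Quadratic-form bound via traces (Appendix B): Let M be a real symmetric positive semidefinite n × n matrix, Σ a real symmetric positive definite n × n matrix, and x ∈ ℝⁿ. Then xᵀ M x ≤ (xᵀ Σ⁻¹ x) · trace(M Σ). -/
/-!
Quadratic-form bound via traces (Appendix B).
-/

open Matrix
open scoped MatrixOrder

lemma vecMul_eq_mulVec_of_symm {n : ℕ} {A : Matrix (Fin n) (Fin n) ℝ} (h : Aᵀ = A)
    (v : Fin n → ℝ) : v ᵥ* A = A *ᵥ v := by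
  conv_lhs => rw [← h]
  exact Matrix.vecMul_transpose A v

lemma dot_trace_bound {n : ℕ} (N : Matrix (Fin n) (Fin n) ℝ)
    (hN : N.PosSemidef) (y : Fin n → ℝ) :
    y ⬝ᵥ (N *ᵥ y) ≤ (y ⬝ᵥ y) * N.trace := by
  set C := CFC.sqrt N with hCdef
  have hC : C * C = N := CFC.sqrt_mul_sqrt_self N hN.nonneg
  have hCsym : Cᵀ = C := by
    have := (CFC.sqrt_nonneg N).posSemidef.isHermitian
    simpa [Matrix.IsHermitian] using this
  have h1 : y ⬝ᵥ (N *ᵥ y) = (C *ᵥ y) ⬝ᵥ (C *ᵥ y) := by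
    rw [← hC, ← Matrix.mulVec_mulVec, Matrix.dotProduct_mulVec,
      vecMul_eq_mulVec_of_symm hCsym]
  have htr : N.trace = ∑ i, ∑ j, (C i j)^2 := by
    rw [← hC, Matrix.trace]
    refine Finset.sum_congr rfl fun i _ => ?_
    rw [Matrix.diag_apply, Matrix.mul_apply]
    refine Finset.sum_congr rfl fun j _ => ?_
    have h4 : C j i = Cᵀ i j := rfl
    rw [h4, hCsym]; ring
  rw [h1, htr, Finset.mul_sum, dotProduct]
  apply Finset.sum_le_sum
  intro i _
  have cs := Finset.sum_mul_sq_le_sq_mul_sq Finset.univ (fun j => C i j) y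
  have h2 : (C *ᵥ y) i * (C *ᵥ y) i = (∑ j, C i j * y j)^2 := by
    rw [Matrix.mulVec, dotProduct]; ring
  have h3 : y ⬝ᵥ y = ∑ j, (y j)^2 := by
    rw [dotProduct]; exact Finset.sum_congr rfl fun j _ => (sq (y j)).symm
  rw [h2, h3, mul_comm]
  exact cs

/-- Let `M` be real symmetric positive semidefinite, `Σ` real symmetric positive definite
and `x ∈ ℝⁿ`. Then `xᵀ M x ≤ (xᵀ Σ⁻¹ x) · trace(M Σ)`. -/
theorem quad_form_le_trace {n : ℕ} (M S : Matrix (Fin n) (Fin n) ℝ)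
    (hM : M.PosSemidef) (hS : S.PosDef) (x : Fin n → ℝ) :
    x ⬝ᵥ (M *ᵥ x) ≤ (x ⬝ᵥ (S⁻¹ *ᵥ x)) * (M * S).trace := by
  set B := CFC.sqrt S with hBdef
  have hB : B * B = S := CFC.sqrt_mul_sqrt_self S hS.posSemidef.nonneg
  have hBpsd : B.PosSemidef := (CFC.sqrt_nonneg S).posSemidef
  have hBsym : Bᵀ = B := by
    have := hBpsd.isHermitian; simpa [Matrix.IsHermitian] using this
  have hdet : IsUnit B.det := isUnit_iff_ne_zero.mpr (by
    intro h
    apply hS.det_pos.ne'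
    rw [← hB, Matrix.det_mul, h, mul_zero])
  have hBinv : B * B⁻¹ = 1 := Matrix.mul_nonsing_inv B hdet
  set z := B⁻¹ *ᵥ x with hz
  have hx : B *ᵥ z = x := by rw [hz, Matrix.mulVec_mulVec, hBinv, Matrix.one_mulVec]
  have hzz : z ⬝ᵥ z = x ⬝ᵥ (S⁻¹ *ᵥ x) := by
    have hSinv : S⁻¹ = B⁻¹ * B⁻¹ := by rw [← hB, Matrix.mul_inv_rev]
    have hBinvSym : (B⁻¹)ᵀ = B⁻¹ := by rw [Matrix.transpose_nonsing_inv, hBsym]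
    rw [hSinv, ← Matrix.mulVec_mulVec, Matrix.dotProduct_mulVec,
      vecMul_eq_mulVec_of_symm hBinvSym, ← hz]
    exact dotProduct_comm _ _
  clear_value z
  have hBMB : (B * M * B).PosSemidef := by
    have := hM.mul_mul_conjTranspose_same B
    rw [Matrix.conjTranspose_eq_transpose_of_trivial, hBsym] at this; exact this
  have key := dot_trace_bound (B * M * B) hBMB z
  have hquad : z ⬝ᵥ ((B * M * B) *ᵥ z) = x ⬝ᵥ (M *ᵥ x) := by
    calc z ⬝ᵥ ((B * M * B) *ᵥ z) = z ⬝ᵥ (B *ᵥ (M *ᵥ (B *ᵥ z))) := by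
          rw [Matrix.mulVec_mulVec, Matrix.mulVec_mulVec]
      _ = (B *ᵥ z) ⬝ᵥ (M *ᵥ (B *ᵥ z)) := by
          rw [Matrix.dotProduct_mulVec, vecMul_eq_mulVec_of_symm hBsym]
      _ = x ⬝ᵥ (M *ᵥ x) := by rw [hx]
  have htr : (B * M * B).trace = (M * S).trace := by
    rw [Matrix.trace_mul_cycle, hB, Matrix.trace_mul_comm]
  rw [← hquad, ← hzz, ← htr]
  exact key
end

section
/- Trace transfer inequality (Appendix B): Let M and Σ_p be real symmetric positive semidefinite n × n matrices and Σ_q a real symmetric positive definite n × n matrix. Then trace(M Σ_p) ≤ trace(M Σ_q) · trace(Σ_q⁻¹ Σ_p). -/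
/-!
Trace transfer inequality (Appendix B).
-/

open Matrix
open scoped MatrixOrder Matrix.Norms.L2Operator

private lemma trace_mul_le_trace_mul_trace {n : ℕ} (A B : Matrix (Fin n) (Fin n) ℝ)
    (hA : A.PosSemidef) (hB : B.PosSemidef) : (A * B).trace ≤ A.trace * B.trace := by
  set C := CFC.sqrt A with hCdef
  set D := CFC.sqrt B with hDdef
  have hCC : C * C = A := CFC.sqrt_mul_sqrt_self A hA.nonneg
  have hDD : D * D = B := CFC.sqrt_mul_sqrt_self B hB.nonneg
  have hCsym : Cᵀ = C := (CFC.sqrt_nonneg A).posSemidef.isHermitian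
  have hDsym : Dᵀ = D := (CFC.sqrt_nonneg B).posSemidef.isHermitian
  have h1 : (A * B).trace = ((C * D)ᵀ * (C * D)).trace := by
    rw [transpose_mul, hCsym, hDsym, ← hCC, ← hDD]
    rw [show C * C * (D * D) = (C * (C * D)) * D by simp only [Matrix.mul_assoc],
      Matrix.trace_mul_comm]
    simp only [Matrix.mul_assoc]
  have h2 : A.trace = ∑ i, ∑ k, C i k ^ 2 := by
    rw [← hCC, Matrix.trace, Finset.sum_congr rfl]
    intro i _
    rw [Matrix.diag_apply, Matrix.mul_apply]
    refine Finset.sum_congr rfl fun k _ => ?_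
    have : C k i = C i k := by
      conv_lhs => rw [← hCsym]
      rfl
    rw [this]; ring
  have h3 : B.trace = ∑ j, ∑ k, D k j ^ 2 := by
    rw [← hDD, Matrix.trace, Finset.sum_congr rfl]
    intro j _
    rw [Matrix.diag_apply, Matrix.mul_apply]
    refine Finset.sum_congr rfl fun k _ => ?_
    have : D j k = D k j := by
      conv_lhs => rw [← hDsym]
      rfl
    rw [this]; ring
  rw [h1, h2, h3, Matrix.trace]
  have key : ∀ j, ((C * D)ᵀ * (C * D)).diag j = ∑ i, ((C * D) i j) ^ 2 := by
    intro j
    rw [Matrix.diag_apply, Matrix.mul_apply]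
    refine Finset.sum_congr rfl fun i _ => ?_
    simp [Matrix.transpose_apply, sq]
  calc ∑ j, ((C * D)ᵀ * (C * D)).diag j
      = ∑ j, ∑ i, ((C * D) i j) ^ 2 := by simp_rw [key]
    _ ≤ ∑ j, ∑ i, (∑ k, C i k ^ 2) * (∑ k, D k j ^ 2) := by
        refine Finset.sum_le_sum fun j _ => Finset.sum_le_sum fun i _ => ?_
        rw [Matrix.mul_apply]
        exact Finset.sum_mul_sq_le_sq_mul_sq _ _ _
    _ = (∑ i, ∑ k, C i k ^ 2) * ∑ j, ∑ k, D k j ^ 2 := by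
        rw [Finset.sum_comm]
        rw [← Finset.sum_mul_sum]

/-- Let `M` and `Σ_p` be real symmetric positive semidefinite and `Σ_q` real symmetric positive
definite. Then `trace(M Σ_p) ≤ trace(M Σ_q) · trace(Σ_q⁻¹ Σ_p)`. -/
theorem trace_transfer {n : ℕ} (M Sp Sq : Matrix (Fin n) (Fin n) ℝ)
    (hM : M.PosSemidef) (hSp : Sp.PosSemidef) (hSq : Sq.PosDef) :
    (M * Sp).trace ≤ (M * Sq).trace * (Sq⁻¹ * Sp).trace := by
  set S := CFC.sqrt Sq with hSdef
  have hSS : S * S = Sq := CFC.sqrt_mul_sqrt_self Sq hSq.posSemidef.nonneg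
  have hSpsd : S.PosSemidef := (CFC.sqrt_nonneg Sq).posSemidef
  have hSsym : Sᵀ = S := hSpsd.isHermitian
  -- S is invertible
  have hSqUnit : IsUnit Sq := hSq.isUnit
  have hSunit : IsUnit S := by
    have : IsUnit (S * S) := hSS ▸ hSqUnit
    exact (isUnit_iff_isUnit_det S).2 <| by
      have := (isUnit_iff_isUnit_det _).1 this
      rw [Matrix.det_mul] at this
      exact (IsUnit.mul_iff.1 this).1
  set T := S⁻¹ with hTdef
  have hST : S * T = 1 := Matrix.mul_nonsing_inv S ((isUnit_iff_isUnit_det S).1 hSunit)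
  have hTS : T * S = 1 := Matrix.nonsing_inv_mul S ((isUnit_iff_isUnit_det S).1 hSunit)
  have hTsym : Tᵀ = T := by rw [hTdef, Matrix.transpose_nonsing_inv, hSsym]
  have hTT : T * T = Sq⁻¹ := by rw [← hSS, Matrix.mul_inv_rev]
  -- the two PSD matrices
  have hA : (S * M * S).PosSemidef := by
    have := hM.mul_mul_conjTranspose_same S
    simpa [Matrix.conjTranspose_eq_transpose_of_trivial, hSsym] using this
  have hB : (T * Sp * T).PosSemidef := by
    have := hSp.mul_mul_conjTranspose_same T
    simpa [Matrix.conjTranspose_eq_transpose_of_trivial, hTsym] using this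
  have key := trace_mul_le_trace_mul_trace _ _ hA hB
  have e1 : (S * M * S * (T * Sp * T)).trace = (M * Sp).trace := by
    rw [show S * M * S * (T * Sp * T) = S * (M * (S * T) * Sp * T) by
      simp only [Matrix.mul_assoc]]
    rw [Matrix.trace_mul_comm, hST]
    rw [show M * 1 * Sp * T * S = M * Sp * (T * S) by simp only [Matrix.mul_assoc, Matrix.mul_one, Matrix.one_mul]]
    rw [hTS, Matrix.mul_one]
  have e2 : (S * M * S).trace = (M * Sq).trace := by
    rw [Matrix.trace_mul_comm, ← Matrix.mul_assoc, hSS, Matrix.trace_mul_comm]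
  have e3 : (T * Sp * T).trace = (Sq⁻¹ * Sp).trace := by
    rw [Matrix.trace_mul_comm, ← Matrix.mul_assoc, hTT]
  rw [e1, e2, e3] at key
  exact key
end

section
/- Mean-term bound (Appendix B): Let M be a real symmetric positive semidefinite n × n matrix, Σ_q a real symmetric positive definite n × n matrix, μ_p, μ_q ∈ ℝⁿ, and ε_t, ε ≥ 0. If (μ_p − μ_q)ᵀ Σ_q⁻¹ (μ_p − μ_q) ≤ 2 ε_t and μ_qᵀ M μ_q + trace(M Σ_q) ≤ 2 ε, then μ_pᵀ M μ_p ≤ 2 ε (1 + 2 ε_t). -/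
/-!
Mean-term bound (Appendix B).
-/

open Matrix
open scoped MatrixOrder

private lemma psd_key {n : ℕ} (B : Matrix (Fin n) (Fin n) ℝ) (a b : Fin n → ℝ) :
    a ⬝ᵥ ((Bᴴ * B) *ᵥ b) = (B *ᵥ a) ⬝ᵥ (B *ᵥ b) := by
  rw [← mulVec_mulVec, dotProduct_mulVec, vecMul_conjTranspose]
  simp

/-- Cauchy–Schwarz for a PSD quadratic form. -/
private lemma psd_cs {n : ℕ} {N : Matrix (Fin n) (Fin n) ℝ} (hN : N.PosSemidef)
    (x y : Fin n → ℝ) :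
    (x ⬝ᵥ (N *ᵥ y)) ^ 2 ≤ (x ⬝ᵥ (N *ᵥ x)) * (y ⬝ᵥ (N *ᵥ y)) := by
  obtain ⟨B, rfl⟩ : ∃ B : Matrix (Fin n) (Fin n) ℝ, N = Bᴴ * B :=
    ⟨CFC.sqrt N, by
      rw [(CFC.sqrt_nonneg N).posSemidef.1.eq]; exact (CFC.sqrt_mul_sqrt_self N hN.nonneg).symm⟩
  rw [psd_key, psd_key, psd_key]
  have h := Finset.sum_mul_sq_le_sq_mul_sq Finset.univ (B *ᵥ x) (B *ᵥ y)
  simpa [dotProduct, sq] using h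

/-- Quadratic form of a PSD matrix is bounded by trace times the norm squared. -/
private lemma psd_quad_le_trace {n : ℕ} {N : Matrix (Fin n) (Fin n) ℝ} (hN : N.PosSemidef)
    (x : Fin n → ℝ) : x ⬝ᵥ (N *ᵥ x) ≤ N.trace * (x ⬝ᵥ x) := by
  obtain ⟨B, rfl⟩ : ∃ B : Matrix (Fin n) (Fin n) ℝ, N = Bᴴ * B :=
    ⟨CFC.sqrt N, by
      rw [(CFC.sqrt_nonneg N).posSemidef.1.eq]; exact (CFC.sqrt_mul_sqrt_self N hN.nonneg).symm⟩
  rw [psd_key]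
  have h1 : (B *ᵥ x) ⬝ᵥ (B *ᵥ x) = ∑ i, (∑ j, B i j * x j) ^ 2 := by
    simp [dotProduct, mulVec, sq]
  have h2 : (Bᴴ * B).trace = ∑ i, ∑ j, (B i j) ^ 2 := by
    rw [Matrix.trace]
    simp [Matrix.diag, Matrix.mul_apply, sq]
    exact Finset.sum_comm
  have h3 : x ⬝ᵥ x = ∑ j, (x j) ^ 2 := by simp [dotProduct, sq]
  rw [h1, h2, h3, Finset.sum_mul]
  exact Finset.sum_le_sum fun i _ =>
    Finset.sum_mul_sq_le_sq_mul_sq Finset.univ (fun j => B i j) x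

private lemma psd_trace_nonneg {n : ℕ} {N : Matrix (Fin n) (Fin n) ℝ} (hN : N.PosSemidef) :
    0 ≤ N.trace := by
  rw [Matrix.trace]
  refine Finset.sum_nonneg fun i _ => ?_
  exact hN.diag_nonneg

/-- Let `M` be real symmetric positive semidefinite, `Σ_q` real symmetric positive definite,
`μ_p, μ_q ∈ ℝⁿ` and `ε_t, ε ≥ 0`. If `(μ_p − μ_q)ᵀ Σ_q⁻¹ (μ_p − μ_q) ≤ 2 ε_t` and
`μ_qᵀ M μ_q + trace(M Σ_q) ≤ 2 ε`, then `μ_pᵀ M μ_p ≤ 2 ε (1 + 2 ε_t)`. -/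
theorem mean_term_bound {n : ℕ} (M Sq : Matrix (Fin n) (Fin n) ℝ)
    (hM : M.PosSemidef) (hSq : Sq.PosDef)
    (μp μq : Fin n → ℝ) (εt ε : ℝ) (hεt : 0 ≤ εt) (hε : 0 ≤ ε)
    (h1 : (μp - μq) ⬝ᵥ (Sq⁻¹ *ᵥ (μp - μq)) ≤ 2 * εt)
    (h2 : μq ⬝ᵥ (M *ᵥ μq) + (M * Sq).trace ≤ 2 * ε) :
    μp ⬝ᵥ (M *ᵥ μp) ≤ 2 * ε * (1 + 2 * εt) := by
  set v : Fin n → ℝ := μp - μq with hv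
  set R : Matrix (Fin n) (Fin n) ℝ := CFC.sqrt Sq with hRdef
  have hR : R.PosSemidef := (CFC.sqrt_nonneg Sq).posSemidef
  have hRR : R * R = Sq := CFC.sqrt_mul_sqrt_self Sq hSq.posSemidef.nonneg
  have hRsymm : Rᵀ = R := hR.isHermitian.eq
  have hMT : Mᵀ = M := hM.isHermitian.eq
  have hdet : IsUnit R.det := by
    have hdd : R.det * R.det = Sq.det := by rw [← det_mul, hRR]
    have hSqdet := hSq.det_pos
    refine isUnit_iff_ne_zero.mpr fun h => ?_
    rw [h, mul_zero] at hdd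
    exact hSq.det_pos.ne' hdd.symm
  have hRinv : R * R⁻¹ = 1 := Matrix.mul_nonsing_inv R hdet
  have hRinv' : R⁻¹ * R = 1 := Matrix.nonsing_inv_mul R hdet
  have hSqinv : Sq⁻¹ = R⁻¹ * R⁻¹ := by rw [← hRR, Matrix.mul_inv_rev]
  set u : Fin n → ℝ := R⁻¹ *ᵥ v with hu
  have hvu : v = R *ᵥ u := by
    rw [hu, mulVec_mulVec, hRinv, one_mulVec]
  have hRmv : ∀ w z : Fin n → ℝ, (R *ᵥ w) ⬝ᵥ z = w ⬝ᵥ (R *ᵥ z) := by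
    intro w z
    rw [← hRsymm, mulVec_transpose, ← dotProduct_mulVec, hRsymm]
  set N : Matrix (Fin n) (Fin n) ℝ := R * M * R with hN
  have hNpsd : N.PosSemidef := by
    have := hM.mul_mul_conjTranspose_same R
    simpa [hRsymm] using this
  have hs : v ⬝ᵥ (Sq⁻¹ *ᵥ v) = u ⬝ᵥ u := by
    rw [hvu, hRmv, hSqinv]
    simp only [mulVec_mulVec, ← Matrix.mul_assoc]
    rw [hRinv, Matrix.one_mul, hRinv', one_mulVec]
  have hb : v ⬝ᵥ (M *ᵥ v) = u ⬝ᵥ (N *ᵥ u) := by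
    rw [hvu, hRmv, hN]
    simp only [mulVec_mulVec, ← Matrix.mul_assoc]
  have hT : N.trace = (M * Sq).trace := by
    rw [hN, Matrix.trace_mul_cycle, hRR, Matrix.trace_mul_comm]
  set a := μq ⬝ᵥ (M *ᵥ μq) with ha
  set b := v ⬝ᵥ (M *ᵥ v) with hbdef
  set c := μq ⬝ᵥ (M *ᵥ v) with hc
  set T := (M * Sq).trace with hTdef
  set s := v ⬝ᵥ (Sq⁻¹ *ᵥ v) with hsdef
  have hexp : μp ⬝ᵥ (M *ᵥ μp) = a + 2 * c + b := by
    have hμp : μp = μq + v := by simp [hv]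
    have hcomm : v ⬝ᵥ (M *ᵥ μq) = c := by
      rw [hc, dotProduct_mulVec, ← mulVec_transpose, hMT, dotProduct_comm]
    rw [hμp, mulVec_add, dotProduct_add, add_dotProduct, add_dotProduct, hcomm]
    ring
  have hann : 0 ≤ a := by simpa using hM.dotProduct_mulVec_nonneg μq
  have hbnn : 0 ≤ b := by simpa [hbdef] using hM.dotProduct_mulVec_nonneg v
  have hTnn : 0 ≤ T := hT ▸ psd_trace_nonneg hNpsd
  have hsnn : 0 ≤ s := by
    have hpsd : Sq⁻¹.PosSemidef := hSq.inv.posSemidef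
    simpa [hsdef] using hpsd.dotProduct_mulVec_nonneg v
  have hbTs : b ≤ T * s := by
    calc b = u ⬝ᵥ (N *ᵥ u) := hb
      _ ≤ N.trace * (u ⬝ᵥ u) := psd_quad_le_trace hNpsd u
      _ = T * s := by rw [hT, ← hs]
  have hcs : c ^ 2 ≤ a * b := psd_cs hM μq v
  have h4 : c ^ 2 ≤ (a * s) * T := by nlinarith
  have hXY : 0 ≤ a * s + T := by positivity
  have h2c : 2 * c ≤ a * s + T := by
    nlinarith [sq_nonneg (a * s - T), hXY, h4]
  rw [hexp]
  nlinarith [mul_nonneg (add_nonneg hann hTnn) (sub_nonneg.mpr h1),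
    mul_nonneg (sub_nonneg.mpr h2) (by positivity : (0:ℝ) ≤ 1 + 2 * εt)]
end

section
/- Combined matrix bound underlying Eq. (kl_diff): Let M be a real symmetric positive semidefinite n × n matrix, Σ_p and Σ_q real symmetric positive definite n × n matrices, μ_p, μ_q ∈ ℝⁿ, and ε_t, ε ≥ 0. Assume: (i) (μ_p − μ_q)ᵀ Σ_q⁻¹ (μ_p − μ_q) ≤ 2 ε_t; (ii) trace(Σ_q⁻¹ Σ_p) − n − log det(Σ_q⁻¹ Σ_p) ≤ 2 ε_t; (iii) μ_qᵀ M μ_q + trace(M Σ_q) ≤ 2 ε. Then μ_pᵀ M μ_p + trace(M Σ_p) ≤ 2 ε (1 + 6 ε_t + 2 n). -/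
/-!
Combined matrix bound underlying Eq. (kl_diff).
-/

open Matrix

variable {n : ℕ}

-- symmetric dot product swap
lemma symm_dot {T : Matrix (Fin n) (Fin n) ℝ} (hT : T.IsHermitian)
    (x z : Fin n → ℝ) : x ⬝ᵥ (T *ᵥ z) = (T *ᵥ x) ⬝ᵥ z := by
  have hTt : Tᵀ = T := by
    ext i j
    have := congrFun (congrFun hT.eq i) j
    simpa [conjTranspose_apply] using this
  rw [dotProduct_mulVec]
  conv_lhs => rw [← hTt, vecMul_transpose]

section
open scoped MatrixOrder
lemma psd_sqrt_exists {A : Matrix (Fin n) (Fin n) ℝ} (hA : A.PosSemidef) :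
    ∃ S : Matrix (Fin n) (Fin n) ℝ, S.PosSemidef ∧ S * S = A :=
  ⟨CFC.sqrt A, nonneg_iff_posSemidef.mp (CFC.sqrt_nonneg A), CFC.sqrt_mul_sqrt_self A hA.nonneg⟩
end

lemma psd_eq_ct_mul_self {A : Matrix (Fin n) (Fin n) ℝ} (hA : A.PosSemidef) :
    ∃ B : Matrix (Fin n) (Fin n) ℝ, A = Bᴴ * B := by
  obtain ⟨S, hS, hSS⟩ := psd_sqrt_exists hA
  exact ⟨S, by rw [hS.1.eq, hSS]⟩

-- trace = sum of eigenvalues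
lemma trace_eq_sum_eig {A : Matrix (Fin n) (Fin n) ℝ} (hA : A.IsHermitian) :
    A.trace = ∑ i, hA.eigenvalues i := by
  conv_lhs => rw [hA.spectral_theorem, Unitary.conjStarAlgAut_apply]
  rw [trace_mul_cycle]
  rw [show (star (hA.eigenvectorUnitary : Matrix (Fin n) (Fin n) ℝ)) *
      (hA.eigenvectorUnitary : Matrix (Fin n) (Fin n) ℝ) = 1 from
    Unitary.coe_star_mul_self hA.eigenvectorUnitary, one_mul, trace_diagonal]
  simp

lemma psd_trace_nonneg_s12 {A : Matrix (Fin n) (Fin n) ℝ} (hA : A.PosSemidef) :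
    0 ≤ A.trace := by
  rw [trace_eq_sum_eig hA.1]
  exact Finset.sum_nonneg fun i _ => hA.eigenvalues_nonneg i

lemma trace_mul_psd_nonneg {M X : Matrix (Fin n) (Fin n) ℝ}
    (hM : M.PosSemidef) (hX : X.PosSemidef) : 0 ≤ (M * X).trace := by
  obtain ⟨R, hR, hRR⟩ := psd_sqrt_exists hX
  have h1 : M * X = M * (R * R) := by rw [hRR]
  have h2 : (M * (R * R)).trace = (R * M * R).trace := by
    rw [← Matrix.mul_assoc, trace_mul_cycle]
  have h3 : (R * M * R).PosSemidef := by
    have := hM.mul_mul_conjTranspose_same R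
    rwa [hR.1.eq] at this
  rw [h1, h2]
  exact psd_trace_nonneg_s12 h3

-- c • 1 - A is PSD if all eigenvalues ≤ c
lemma smul_one_sub_psd {A : Matrix (Fin n) (Fin n) ℝ} (hA : A.IsHermitian) {c : ℝ}
    (hc : ∀ i, hA.eigenvalues i ≤ c) :
    (c • (1 : Matrix (Fin n) (Fin n) ℝ) - A).PosSemidef := by
  set U : Matrix (Fin n) (Fin n) ℝ := (hA.eigenvectorUnitary : Matrix (Fin n) (Fin n) ℝ) with hU
  have hUU : U * star U = 1 := Unitary.coe_mul_star_self hA.eigenvectorUnitary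
  have key : c • (1 : Matrix (Fin n) (Fin n) ℝ) - A
      = U * diagonal (fun i => c - hA.eigenvalues i) * star U := by
    have hd : diagonal (fun i => c - hA.eigenvalues i)
        = c • (1 : Matrix (Fin n) (Fin n) ℝ)
          - diagonal (RCLike.ofReal ∘ hA.eigenvalues) := by
      rw [smul_one_eq_diagonal, diagonal_sub]
      rfl
    rw [hd, Matrix.mul_sub, Matrix.sub_mul, mul_smul_comm, Matrix.mul_one,
      smul_mul_assoc, hUU, hU]
    conv_lhs => rw [hA.spectral_theorem, Unitary.conjStarAlgAut_apply]
  rw [key]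
  have hdiag : (diagonal (fun i => c - hA.eigenvalues i)).PosSemidef :=
    posSemidef_diagonal_iff.mpr fun i => by linarith [hc i]
  have := hdiag.mul_mul_conjTranspose_same U
  simpa [star_eq_conjTranspose] using this

lemma psd_trace_smul_sub {X : Matrix (Fin n) (Fin n) ℝ} (hX : X.PosSemidef) :
    (X.trace • (1 : Matrix (Fin n) (Fin n) ℝ) - X).PosSemidef :=
  smul_one_sub_psd hX.1 fun j => by
    calc hX.1.eigenvalues j ≤ ∑ i, hX.1.eigenvalues i :=
          Finset.single_le_sum (fun i _ => hX.eigenvalues_nonneg i) (Finset.mem_univ j)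
      _ = X.trace := (trace_eq_sum_eig hX.1).symm

lemma trace_mul_le_trace_mul {M X : Matrix (Fin n) (Fin n) ℝ}
    (hM : M.PosSemidef) (hX : X.PosSemidef) : (M * X).trace ≤ M.trace * X.trace := by
  have h := trace_mul_psd_nonneg hM (psd_trace_smul_sub hX)
  rw [Matrix.mul_sub, mul_smul_comm, Matrix.mul_one, trace_sub, trace_smul, smul_eq_mul] at h
  nlinarith [h]

lemma psd_vecMulVec (x : Fin n → ℝ) : (vecMulVec x x).PosSemidef := by
  have hmv : ∀ y : Fin n → ℝ, (vecMulVec x x) *ᵥ y = (x ⬝ᵥ y) • x := by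
    intro y
    ext i
    simp only [vecMulVec_apply, mulVec, dotProduct, Pi.smul_apply, smul_eq_mul,
      Finset.sum_mul, Finset.mul_sum]
    exact Finset.sum_congr rfl fun k _ => by ring
  refine PosSemidef.of_dotProduct_mulVec_nonneg ?_ ?_
  · ext i j
    simp [vecMulVec_apply, conjTranspose_apply, mul_comm]
  · intro y
    rw [hmv]
    have : star y = y := by simp
    rw [this, dotProduct_smul, smul_eq_mul, dotProduct_comm]
    exact mul_self_nonneg _
lemma trace_vecMulVec (x : Fin n → ℝ) : (vecMulVec x x).trace = x ⬝ᵥ x := by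
  simp [Matrix.trace, vecMulVec_apply, dotProduct]

lemma trace_mul_vecMulVec (B : Matrix (Fin n) (Fin n) ℝ) (x : Fin n → ℝ) :
    (B * vecMulVec x x).trace = x ⬝ᵥ (B *ᵥ x) := by
  simp only [Matrix.trace, diag_apply, mul_apply, vecMulVec_apply, dotProduct, mulVec,
    Finset.mul_sum]
  exact Finset.sum_congr rfl fun i _ => Finset.sum_congr rfl fun j _ => by ring

lemma quad_le_trace_mul {B : Matrix (Fin n) (Fin n) ℝ} (hB : B.PosSemidef) (x : Fin n → ℝ) :
    x ⬝ᵥ (B *ᵥ x) ≤ B.trace * (x ⬝ᵥ x) := by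
  have h := trace_mul_le_trace_mul hB (psd_vecMulVec x)
  rwa [trace_mul_vecMulVec, trace_vecMulVec] at h

lemma eig_le {lam e : ℝ} (hpos : 0 < lam) (he : 0 ≤ e)
    (hj : lam - 1 - Real.log lam ≤ 2 * e) : lam ≤ (1 + Real.sqrt (2 * e)) ^ 2 := by
  have hsqj : Real.sqrt lam ^ 2 = lam := Real.sq_sqrt hpos.le
  have hlog2 : Real.log lam = 2 * Real.log (Real.sqrt lam) := by
    rw [Real.log_sqrt hpos.le]; ring
  have h4 : Real.log (Real.sqrt lam) ≤ Real.sqrt lam - 1 :=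
    Real.log_le_sub_one_of_pos (Real.sqrt_pos.mpr hpos)
  have h5 : (Real.sqrt lam - 1) ^ 2 ≤ 2 * e := by nlinarith
  have h6 : Real.sqrt lam - 1 ≤ Real.sqrt (2 * e) := by
    rcases le_or_gt (Real.sqrt lam) 1 with h | h
    · have := Real.sqrt_nonneg (2 * e); linarith
    · exact (Real.le_sqrt (by linarith) (by linarith)).mpr h5
  nlinarith [Real.sqrt_nonneg lam, Real.sqrt_nonneg (2 * e)]

lemma one_add_sqrt_sq_le {e : ℝ} (he : 0 ≤ e) : (1 + Real.sqrt (2 * e)) ^ 2 ≤ 2 + 4 * e := by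
  have h := Real.sq_sqrt (by linarith : (0:ℝ) ≤ 2 * e)
  nlinarith [sq_nonneg (Real.sqrt (2 * e) - 1), Real.sqrt_nonneg (2 * e)]

lemma cross_bound {c2 s g r e : ℝ} (hs0 : 0 ≤ s) (hr0 : 0 ≤ r) (he : 0 ≤ e)
    (hcs : c2 ^ 2 ≤ s * g) (hgr : g ≤ r * (2 * e)) : 2 * c2 ≤ 2 * e * s + r := by
  have hc2sq : c2 ^ 2 ≤ 2 * e * s * r := by
    nlinarith [mul_le_mul_of_nonneg_left hgr hs0]
  have hb0 : 0 ≤ 2 * e * s + r := by nlinarith [mul_nonneg he hs0]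
  have hsqle : (2 * c2) ^ 2 ≤ (2 * e * s + r) ^ 2 := by
    nlinarith [sq_nonneg (2 * e * s - r)]
  nlinarith [hsqle, hb0]


/-- Let `M` be real symmetric positive semidefinite, `Σ_p`, `Σ_q` real symmetric positive
definite, `μ_p, μ_q ∈ ℝⁿ` and `ε_t, ε ≥ 0`. Assume
(i) `(μ_p − μ_q)ᵀ Σ_q⁻¹ (μ_p − μ_q) ≤ 2 ε_t`;
(ii) `trace(Σ_q⁻¹ Σ_p) − n − log det(Σ_q⁻¹ Σ_p) ≤ 2 ε_t`;
(iii) `μ_qᵀ M μ_q + trace(M Σ_q) ≤ 2 ε`.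
Then `μ_pᵀ M μ_p + trace(M Σ_p) ≤ 2 ε (1 + 6 ε_t + 2 n)`. -/
theorem combined_kl_diff_bound {n : ℕ} (M Sp Sq : Matrix (Fin n) (Fin n) ℝ)
    (hM : M.PosSemidef) (hSp : Sp.PosDef) (hSq : Sq.PosDef)
    (μp μq : Fin n → ℝ) (εt ε : ℝ) (hεt : 0 ≤ εt) (hε : 0 ≤ ε)
    (h1 : (μp - μq) ⬝ᵥ (Sq⁻¹ *ᵥ (μp - μq)) ≤ 2 * εt)
    (h2 : (Sq⁻¹ * Sp).trace - (n : ℝ) - Real.log (Sq⁻¹ * Sp).det ≤ 2 * εt)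
    (h3 : μq ⬝ᵥ (M *ᵥ μq) + (M * Sq).trace ≤ 2 * ε) :
    μp ⬝ᵥ (M *ᵥ μp) + (M * Sp).trace ≤ 2 * ε * (1 + 6 * εt + 2 * n) := by
  set d : Fin n → ℝ := μp - μq with hd
  have hμ : μq + d = μp := by rw [hd]; abel
  have hsq : Sq.PosSemidef := hSq.posSemidef
  obtain ⟨S, hS, hSS⟩ := psd_sqrt_exists hsq
  have hSH : Sᴴ = S := hS.1
  have hdetS : IsUnit S.det := by
    have h := hSq.det_pos
    rw [← hSS, det_mul] at h
    exact isUnit_iff_ne_zero.mpr (by intro h0; rw [h0] at h; simp at h)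
  have hSinv : S * S⁻¹ = 1 := mul_nonsing_inv _ hdetS
  have hinvS : S⁻¹ * S = 1 := nonsing_inv_mul _ hdetS
  have hSiH : S⁻¹.IsHermitian := by
    show S⁻¹ᴴ = S⁻¹
    rw [conjTranspose_nonsing_inv, hSH]
  have hSqinv : S⁻¹ * S⁻¹ = Sq⁻¹ := by rw [← hSS, Matrix.mul_inv_rev]
  set s : ℝ := μq ⬝ᵥ (M *ᵥ μq) with hs
  set r : ℝ := (M * Sq).trace with hr
  set g : ℝ := d ⬝ᵥ (M *ᵥ d) with hg
  set c2 : ℝ := μq ⬝ᵥ (M *ᵥ d) with hc2def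
  have hs0 : 0 ≤ s := by simpa using hM.dotProduct_mulVec_nonneg μq
  have hg0 : 0 ≤ g := by simpa using hM.dotProduct_mulVec_nonneg d
  have hr0 : 0 ≤ r := trace_mul_psd_nonneg hM hsq
  -- expansion of the quadratic form at μp
  have hcross : d ⬝ᵥ (M *ᵥ μq) = c2 := by
    rw [symm_dot hM.1, dotProduct_comm]
  have e1 : μp ⬝ᵥ (M *ᵥ μp) = s + 2 * c2 + g := by
    rw [← hμ, mulVec_add, add_dotProduct, dotProduct_add, dotProduct_add, hcross]
    ring
  -- bound on g
  set x : Fin n → ℝ := S⁻¹ *ᵥ d with hx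
  have hxd : S *ᵥ x = d := by rw [hx, mulVec_mulVec, hSinv, one_mulVec]
  have hBpsd : (S * M * S).PosSemidef := by
    have := hM.mul_mul_conjTranspose_same S
    rwa [hSH] at this
  have hgx : x ⬝ᵥ ((S * M * S) *ᵥ x) = g := by
    rw [← mulVec_mulVec, ← mulVec_mulVec, hxd, symm_dot hS.1, hxd]
  have hxx : x ⬝ᵥ x = d ⬝ᵥ (Sq⁻¹ *ᵥ d) := by
    conv_lhs => rw [hx]
    rw [← symm_dot hSiH d, mulVec_mulVec, hSqinv]
  have htrB : (S * M * S).trace = r := by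
    rw [trace_mul_cycle, hSS, trace_mul_comm]
  have hgr : g ≤ r * (2 * εt) := by
    have h := quad_le_trace_mul hBpsd x
    rw [hgx, htrB, hxx] at h
    calc g ≤ r * (d ⬝ᵥ (Sq⁻¹ *ᵥ d)) := h
      _ ≤ r * (2 * εt) := mul_le_mul_of_nonneg_left h1 hr0
  -- Cauchy-Schwarz bound on the cross term
  obtain ⟨B, hB⟩ := psd_eq_ct_mul_self hM
  have hBt : ∀ w z : Fin n → ℝ, w ⬝ᵥ (M *ᵥ z) = (B *ᵥ w) ⬝ᵥ (B *ᵥ z) := by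
    intro w z
    rw [hB, ← mulVec_mulVec, dotProduct_mulVec, vecMul_conjTranspose]
    simp
  have hcs : c2 ^ 2 ≤ s * g := by
    rw [hc2def, hs, hg, hBt μq d, hBt μq μq, hBt d d]
    have h := Finset.sum_mul_sq_le_sq_mul_sq Finset.univ (B *ᵥ μq) (B *ᵥ d)
    simpa [dotProduct, pow_two] using h
  have hcross2 : 2 * c2 ≤ 2 * εt * s + r := cross_bound hs0 hr0 hεt hcs hgr
  -- spectral bound
  set A : Matrix (Fin n) (Fin n) ℝ := S⁻¹ * Sp * S⁻¹ with hA
  have hAH : A.IsHermitian := by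
    show Aᴴ = A
    rw [hA, conjTranspose_mul, conjTranspose_mul, hSiH.eq, hSp.1.eq, Matrix.mul_assoc]
  have hApd : A.PosDef := by
    refine PosDef.of_dotProduct_mulVec_pos hAH fun y hy => ?_
    have hyy : S⁻¹ *ᵥ y ≠ 0 := by
      intro h0
      apply hy
      have : (S * S⁻¹) *ᵥ y = 0 := by rw [← mulVec_mulVec, h0, mulVec_zero]
      rwa [hSinv, one_mulVec] at this
    have := hSp.dotProduct_mulVec_pos hyy
    simp only [star_trivial] at this ⊢
    rw [hA, ← mulVec_mulVec, ← mulVec_mulVec, symm_dot hSiH]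
    exact this
  have hlam : ∀ i, 0 < hAH.eigenvalues i := fun i => hApd.eigenvalues_pos i
  have htrA : A.trace = (Sq⁻¹ * Sp).trace := by
    rw [hA, trace_mul_cycle, hSqinv]
  have hdetA : A.det = (Sq⁻¹ * Sp).det := by
    rw [hA, ← hSqinv]
    simp only [det_mul]
    ring
  have hdet_eq : A.det = ∏ i, hAH.eigenvalues i := by
    simpa using hAH.det_eq_prod_eigenvalues
  have htr2 : (∑ i, hAH.eigenvalues i) - (n : ℝ) - Real.log (∏ i, hAH.eigenvalues i) ≤ 2 * εt := by
    rw [← trace_eq_sum_eig hAH, ← hdet_eq, htrA, hdetA]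
    exact h2
  have hlog : Real.log (∏ i, hAH.eigenvalues i) = ∑ i, Real.log (hAH.eigenvalues i) :=
    Real.log_prod fun i _ => (hlam i).ne'
  have hkey : ∀ j, hAH.eigenvalues j ≤ (1 + Real.sqrt (2 * εt)) ^ 2 := by
    intro j
    refine eig_le (hlam j) hεt ?_
    have hterm : ∀ i, 0 ≤ hAH.eigenvalues i - 1 - Real.log (hAH.eigenvalues i) := fun i => by
      linarith [Real.log_le_sub_one_of_pos (hlam i)]
    have hsum : ∑ i, (hAH.eigenvalues i - 1 - Real.log (hAH.eigenvalues i)) ≤ 2 * εt := by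
      have hh : ∑ i, (hAH.eigenvalues i - 1 - Real.log (hAH.eigenvalues i))
          = (∑ i, hAH.eigenvalues i) - (n : ℝ) - ∑ i, Real.log (hAH.eigenvalues i) := by
        rw [Finset.sum_sub_distrib, Finset.sum_sub_distrib]
        simp
      rw [hh, ← hlog]
      exact htr2
    exact le_trans (Finset.single_le_sum (fun i _ => hterm i) (Finset.mem_univ j)) hsum
  set c : ℝ := (1 + Real.sqrt (2 * εt)) ^ 2 with hc
  have hc4 : c ≤ 2 + 4 * εt := one_add_sqrt_sq_le hεt
  have hpsd : (c • (1 : Matrix (Fin n) (Fin n) ℝ) - A).PosSemidef := smul_one_sub_psd hAH hkey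
  have hSAS : S * A * S = Sp := by
    rw [hA]
    simp only [Matrix.mul_assoc]
    rw [hinvS, Matrix.mul_one, ← Matrix.mul_assoc, hSinv, Matrix.one_mul]
  have hconj : S * (c • (1 : Matrix (Fin n) (Fin n) ℝ) - A) * S = c • Sq - Sp := by
    rw [Matrix.mul_sub, Matrix.sub_mul, mul_smul_comm, smul_mul_assoc, Matrix.mul_one, hSS, hSAS]
  have hTp : (c • Sq - Sp).PosSemidef := by
    rw [← hconj]
    have := hpsd.mul_mul_conjTranspose_same S
    rwa [hSH] at this
  have htp : (M * Sp).trace ≤ c * r := by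
    have h := trace_mul_psd_nonneg hM hTp
    rw [Matrix.mul_sub, mul_smul_comm, trace_sub, trace_smul, smul_eq_mul] at h
    linarith
  -- conclusion
  rcases Nat.eq_zero_or_pos n with hn | hn
  · subst hn
    have hz1 : μp ⬝ᵥ (M *ᵥ μp) = 0 := by simp [dotProduct]
    have hz2 : (M * Sp).trace = 0 := by simp [Matrix.trace]
    rw [hz1, hz2]
    have h4 : 0 ≤ ε * εt := mul_nonneg hε hεt
    push_cast
    linarith
  · have hn1 : (1 : ℝ) ≤ n := by exact_mod_cast hn
    rw [e1]
    have htp2 : (M * Sp).trace ≤ (2 + 4 * εt) * r :=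
      le_trans htp (mul_le_mul_of_nonneg_right hc4 hr0)
    have hbig : s + 2 * c2 + g + (M * Sp).trace ≤ (1 + 2 * εt) * s + (3 + 6 * εt) * r := by
      linarith [hcross2, hgr, htp2]
    have he2 : (3 + 6 * εt) * (s + r) ≤ (3 + 6 * εt) * (2 * ε) :=
      mul_le_mul_of_nonneg_left h3 (by linarith)
    have hfin : (1 + 2 * εt) * s + (3 + 6 * εt) * r ≤ (3 + 6 * εt) * (2 * ε) := by
      have h7 : 0 ≤ εt * s := mul_nonneg hεt hs0
      linarith [he2]
    have hεn : ε * 1 ≤ ε * (n : ℝ) := mul_le_mul_of_nonneg_left hn1 hε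
    have hlast : (3 + 6 * εt) * (2 * ε) ≤ 2 * ε * (1 + 6 * εt + 2 * n) := by linarith [hεn]
    linarith [hbig, hfin, hlast]
end

section
/- Closed-form Gaussian policy update (Sec. 3.2): Let d_a, d_s be positive naturals, K a real d_a × d_s matrix, b ∈ ℝ^{d_a}, Σ a symmetric positive definite d_a × d_a matrix, Q_aa a symmetric d_a × d_a matrix, Q_as a d_a × d_s matrix, q_a ∈ ℝ^{d_a}, and η, ω > 0 real numbers such that η Σ⁻¹ − Q_aa is positive definite. Define F = (η Σ⁻¹ − Q_aa)⁻¹, L = η Σ⁻¹ K + Q_as, and f = η Σ⁻¹ b + q_a. Then for every s ∈ ℝ^{d_s} there exists a constant c > 0 such that for all a ∈ ℝ^{d_a}: exp(−(η/(2(η+ω))) (a − K s − b)ᵀ Σ⁻¹ (a − K s − b)) · exp((½ aᵀ Q_aa a + aᵀ Q_as s + aᵀ q_a)/(η+ω)) = c · exp(−½ (a − F (L s + f))ᵀ ((η+ω) F)⁻¹ (a − F (L s + f))); that is, the reweighted Gaussian policy density π(a|s)^{η/(η+ω)} exp(Q(s,a)/(η+ω)) with quadratic Q(s,a) = ½ aᵀ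 Q_aa a + aᵀ Q_as s + aᵀ q_a is, up to a positive factor independent of a, the density shape of the Gaussian with mean F(L s + f) and covariance (η+ω) F. -/
/-!
Closed-form Gaussian policy update (Sec. 3.2).
-/

open Matrix

/-- Swap a symmetric quadratic/bilinear form. -/
private lemma dot_swap {n : ℕ} (A : Matrix (Fin n) (Fin n) ℝ) (hA : Aᵀ = A)
    (x y : Fin n → ℝ) : x ⬝ᵥ (A *ᵥ y) = y ⬝ᵥ (A *ᵥ x) := by
  conv_lhs => rw [← hA, mulVec_transpose]
  rw [dotProduct_comm, ← dotProduct_mulVec]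

/-- **Closed-form Gaussian policy update**: with `F = (η Σ⁻¹ − Q_aa)⁻¹`,
`L = η Σ⁻¹ K + Q_as` and `f = η Σ⁻¹ b + q_a`, for every state `s` the reweighted policy density
`π(a|s)^{η/(η+ω)} · exp(Q(s,a)/(η+ω))` (with Gaussian policy of mean `K s + b` and covariance `Σ`
and quadratic model `Q(s,a) = ½ aᵀ Q_aa a + aᵀ Q_as s + aᵀ q_a`) equals, up to a positive factor
`c` independent of `a`, the density shape of the Gaussian with mean `F (L s + f)` and covariance
`(η+ω) F`. -/
theorem gaussian_policy_update {da ds : ℕ} (hda : 0 < da) (hds : 0 < ds)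
    (K : Matrix (Fin da) (Fin ds) ℝ) (b : Fin da → ℝ)
    (Sg : Matrix (Fin da) (Fin da) ℝ) (hSg : Sg.PosDef)
    (Qaa : Matrix (Fin da) (Fin da) ℝ) (hQaa : Qaa.IsSymm)
    (Qas : Matrix (Fin da) (Fin ds) ℝ) (qa : Fin da → ℝ)
    (η ω : ℝ) (hη : 0 < η) (hω : 0 < ω)
    (hPD : (η • Sg⁻¹ - Qaa).PosDef)
    (F : Matrix (Fin da) (Fin da) ℝ) (hF : F = (η • Sg⁻¹ - Qaa)⁻¹)
    (L : Matrix (Fin da) (Fin ds) ℝ) (hL : L = η • Sg⁻¹ * K + Qas)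
    (f : Fin da → ℝ) (hf : f = η • (Sg⁻¹ *ᵥ b) + qa) :
    ∀ s : Fin ds → ℝ, ∃ c : ℝ, 0 < c ∧ ∀ a : Fin da → ℝ,
      Real.exp (-(η / (2 * (η + ω))) *
          ((a - K *ᵥ s - b) ⬝ᵥ (Sg⁻¹ *ᵥ (a - K *ᵥ s - b)))) *
        Real.exp (((1 / 2) * (a ⬝ᵥ (Qaa *ᵥ a)) + a ⬝ᵥ (Qas *ᵥ s) + a ⬝ᵥ qa) / (η + ω)) =
      c * Real.exp (-(1 / 2) *
          ((a - F *ᵥ (L *ᵥ s + f)) ⬝ᵥ (((η + ω) • F)⁻¹ *ᵥ (a - F *ᵥ (L *ᵥ s + f))))) := by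
  intro s
  have hηω : (0:ℝ) < η + ω := by linarith
  have hηω' : η + ω ≠ 0 := ne_of_gt hηω
  have hSi : (Sg⁻¹)ᵀ = Sg⁻¹ := hSg.inv.1
  have hMsym : (η • Sg⁻¹ - Qaa)ᵀ = η • Sg⁻¹ - Qaa := hPD.1
  have hdet : IsUnit (η • Sg⁻¹ - Qaa).det := isUnit_iff_ne_zero.mpr (ne_of_gt hPD.det_pos)
  have hMF : (η • Sg⁻¹ - Qaa) * F = 1 := by rw [hF]; exact mul_nonsing_inv _ hdet
  have hFM : F * (η • Sg⁻¹ - Qaa) = 1 := by rw [hF]; exact nonsing_inv_mul _ hdet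
  have hinv : ((η + ω) • F)⁻¹ = (η + ω)⁻¹ • (η • Sg⁻¹ - Qaa) := by
    apply inv_eq_right_inv
    rw [smul_mul_assoc, mul_smul_comm, hFM, smul_smul, mul_inv_cancel₀ hηω', one_smul]
  set m : Fin da → ℝ := K *ᵥ s + b with hm
  set w : Fin da → ℝ := L *ᵥ s + f with hw
  set μ : Fin da → ℝ := F *ᵥ w with hμ
  have hMμ : (η • Sg⁻¹ - Qaa) *ᵥ μ = w := by rw [hμ, mulVec_mulVec, hMF, one_mulVec]
  refine ⟨Real.exp ((μ ⬝ᵥ w - η * (m ⬝ᵥ (Sg⁻¹ *ᵥ m))) / (2 * (η + ω))),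
    Real.exp_pos _, fun a => ?_⟩
  rw [← Real.exp_add, ← Real.exp_add]
  congr 1
  have hsub : a - K *ᵥ s - b = a - m := by rw [hm, sub_sub]
  have haw : a ⬝ᵥ w = η * (a ⬝ᵥ (Sg⁻¹ *ᵥ m)) + a ⬝ᵥ (Qas *ᵥ s) + a ⬝ᵥ qa := by
    rw [hw, hL, hf, hm]
    simp only [add_mulVec, smul_mul_assoc, smul_mulVec, ← mulVec_mulVec,
      dotProduct_add, dotProduct_smul, mulVec_add, smul_eq_mul]
    ring
  have e1 : (a - m) ⬝ᵥ Sg⁻¹ *ᵥ (a - m)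
      = a ⬝ᵥ (Sg⁻¹ *ᵥ a) - 2 * (a ⬝ᵥ (Sg⁻¹ *ᵥ m)) + m ⬝ᵥ (Sg⁻¹ *ᵥ m) := by
    rw [mulVec_sub, dotProduct_sub, sub_dotProduct, sub_dotProduct,
      dot_swap Sg⁻¹ hSi m a]
    ring
  have e2 : (a - μ) ⬝ᵥ ((η • Sg⁻¹ - Qaa) *ᵥ (a - μ))
      = η * (a ⬝ᵥ (Sg⁻¹ *ᵥ a)) - a ⬝ᵥ (Qaa *ᵥ a) - 2 * (a ⬝ᵥ w) + μ ⬝ᵥ w := by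
    rw [mulVec_sub, dotProduct_sub, sub_dotProduct, sub_dotProduct,
      dot_swap _ hMsym μ a, hMμ]
    simp only [sub_mulVec, smul_mulVec, dotProduct_sub, dotProduct_smul, smul_eq_mul]
    ring
  rw [hsub, hinv, smul_mulVec, dotProduct_smul, smul_eq_mul, e1, e2, haw]
  field_simp
  ring
end
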